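/- Let u, v, w, q, g, z, h, r be real numbers. Define F : ℝ³ → Matrix 3 3 ℝ by F(y) = [[0, u, v], [w, q, g + w·y₂], [z, h + u·y₂, r + (v+z)·y₂]], let B(y) = (F(y) − F(y)ᵀ)/2 be its antisymmetric part, and define the torsion H_{ijk}(y) = ∂_{y_i}B_{jk}(y) + ∂_{y_j}B_{ki}(y) + ∂_{y_k}B_{ij}(y). Then H_{ijk}(y) = 0 for all indices i,j,k ∈ {1,2,3} and all y ∈ ℝ³, i.e. the sigma model on the Manin triple (2|1) is torsionless. -/

import Mathlib

open Matrix

/-- The torsion potential of a sigma model tensor `F`: its antisymmetric part. -/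
noncomputable def Bpot (F : (Fin 3 → ℝ) → Matrix (Fin 3) (Fin 3) ℝ)
    (y : Fin 3 → ℝ) : Matrix (Fin 3) (Fin 3) ℝ :=
  (1 / 2 : ℝ) • (F y - (F y)ᵀ)

/-- The torsion `H_{ijk} = ∂ᵢ B_{jk} + ∂ⱼ B_{ki} + ∂ₖ B_{ij}` of a sigma model
tensor `F`, where `∂ᵢ` is the partial derivative in the `i`-th coordinate. -/
noncomputable def torsionH (F : (Fin 3 → ℝ) → Matrix (Fin 3) (Fin 3) ℝ)
    (y : Fin 3 → ℝ) (i j k : Fin 3) : ℝ :=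
  deriv (fun t => Bpot F (Function.update y i t) j k) (y i) +
  deriv (fun t => Bpot F (Function.update y j t) k i) (y j) +
  deriv (fun t => Bpot F (Function.update y k t) i j) (y k)

/-- The tensor `F` of the sigma model on the Manin triple `(2|1)`. -/
noncomputable def F21 (u v w q g z h r : ℝ) (y : Fin 3 → ℝ) : Matrix (Fin 3) (Fin 3) ℝ :=
  !![0, u,             v;
     w, q,             g + w * y 1;
     z, h + u * y 1,   r + (v + z) * y 1]

lemma Bpot_apply (F : (Fin 3 → ℝ) → Matrix (Fin 3) (Fin 3) ℝ) (y : Fin 3 → ℝ) (j k : Fin 3) :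
    Bpot F y j k = (1/2 : ℝ) * (F y j k - F y k j) := by
  simp [Bpot]

lemma deriv_affine_sub (a b c d x : ℝ) :
    deriv (fun t : ℝ => a + b * t - (c + d * t)) x = b - d := by
  have h : HasDerivAt (fun t : ℝ => a + b * t - (c + d * t)) (b - d) x := by
    have h0 := (((hasDerivAt_id x).const_mul b).const_add a).sub
      (((hasDerivAt_id x).const_mul d).const_add c)
    simp only [mul_one] at h0
    exact h0
  exact h.deriv

set_option maxHeartbeats 2000000 in
/-- The sigma model on the Manin triple `(2|1)` is torsionless. -/
theorem torsion21_eq_zero (u v w q g z h r : ℝ) :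
    ∀ (y : Fin 3 → ℝ) (i j k : Fin 3), torsionH (F21 u v w q g z h r) y i j k = 0 := by
  intro y i j k
  have hfin : ∀ m : Fin 3, m = 0 ∨ m = 1 ∨ m = 2 := by decide
  rcases hfin i with rfl | rfl | rfl <;> rcases hfin j with rfl | rfl | rfl <;>
      rcases hfin k with rfl | rfl | rfl <;>
    · simp only [torsionH, Bpot_apply, F21, Function.update_apply, Fin.isValue, Matrix.of_apply, Matrix.cons_val_zero, Matrix.cons_val_one, Matrix.cons_val_two, Matrix.head_cons, Matrix.tail_cons]
      norm_num [deriv_affine_sub, Fin.ext_iff, Matrix.cons_val]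
      try ring
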